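/- Let n ≥ 3 be odd, let c < 0, and let w_1, …, w_n ∈ ℝ² (indices modulo n) satisfy [w_i, w_{i+1}] = c for all i and Σ_{i=1}^n w_i = 0; let α > 0. Define 2n vectors E_1, …, E_{2n} by: E_i = w_i and E_{n+i} = −α w_i for 1 ≤ i ≤ n odd, and E_i = −α w_i and E_{n+i} = w_i for 1 ≤ i ≤ n even. Then: (a) Σ_{i=1}^{2n} E_i = 0, so the polygonal line with consecutive side vectors E_1, …, E_{2n} closes up; (b) E_{n+i} is parallel to E_i for every i (opposite sides are parallel); (c) [E_i, E_{i+1}] > 0 for all i modulo 2n (local convexity); (d) [E_{i+1}, E_i] takes the same value (namely αc) for all i modulo 2n, i.e. the resulting polygon is equal-area. -/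

import Mathlib

open scoped BigOperators

/-- `det2 v w` is the determinant of the 2×2 matrix with columns `v, w ∈ ℝ²`. -/
noncomputable def det2 (v w : ℝ × ℝ) : ℝ := v.1 * w.2 - v.2 * w.1

/-- Let `n ≥ 3` be odd, `c < 0`, and `w₁, …, wₙ ∈ ℝ²` (indices mod `n`)
satisfy `[wᵢ, wᵢ₊₁] = c` and `Σ wᵢ = 0`; let `α > 0`. Define `2n` vectors by `Eᵢ = wᵢ`,
`E_{n+i} = -α wᵢ` for `i` odd, and `Eᵢ = -α wᵢ`, `E_{n+i} = wᵢ` for `i` even (`1 ≤ i ≤ n`).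
Then (a) `Σ Eᵢ = 0`; (b) `E_{n+i} ∥ Eᵢ`; (c) `[Eᵢ, Eᵢ₊₁] > 0`; (d) `[Eᵢ₊₁, Eᵢ] = αc` for
all `i` mod `2n` (the polygon with sides `Eᵢ` is a closed, equal-area CPOS polygon). -/
theorem statement5 {n : ℕ} (hn : 3 ≤ n) (hodd : Odd n) (c : ℝ) (hc : c < 0)
    (w : ℤ → ℝ × ℝ) (hper : ∀ i : ℤ, w (i + (n : ℤ)) = w i)
    (hdet : ∀ i : ℤ, det2 (w i) (w (i + 1)) = c)
    (hsum : ∑ i ∈ Finset.Icc (1 : ℤ) (n : ℤ), w i = 0)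
    (α : ℝ) (hα : 0 < α)
    (E : ℤ → ℝ × ℝ)
    (hEper : ∀ i : ℤ, E (i + 2 * (n : ℤ)) = E i)
    (hE1 : ∀ i : ℤ, 1 ≤ i → i ≤ (n : ℤ) → Odd i →
      E i = w i ∧ E ((n : ℤ) + i) = -(α • w i))
    (hE2 : ∀ i : ℤ, 1 ≤ i → i ≤ (n : ℤ) → Even i →
      E i = -(α • w i) ∧ E ((n : ℤ) + i) = w i) :
    (∑ i ∈ Finset.Icc (1 : ℤ) (2 * (n : ℤ)), E i = 0) ∧
    (∀ i : ℤ, ∃ t : ℝ, E (i + (n : ℤ)) = t • E i) ∧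
    (∀ i : ℤ, 0 < det2 (E i) (E (i + 1))) ∧
    (∀ i : ℤ, det2 (E (i + 1)) (E i) = α * c) := by
  have hn3 : (3 : ℤ) ≤ (n : ℤ) := by exact_mod_cast hn
  have hoddZ : Odd (n : ℤ) := by exact_mod_cast hodd
  have hnm : (n : ℤ) % 2 = 1 := Int.odd_iff.mp hoddZ
  -- periodicity of `w` for all integer multiples of `n`
  have hwper : ∀ k : ℤ, ∀ i : ℤ, w (i + (n : ℤ) * k) = w i := by
    intro k
    induction k using Int.induction_on with
    | zero => intro i; simp
    | succ k ih =>
        intro i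
        have h1 : i + (n : ℤ) * ((k : ℤ) + 1) = (i + (n : ℤ) * k) + (n : ℤ) := by ring
        rw [h1, hper, ih]
    | pred k ih =>
        intro i
        have h2 := hper (i + (n : ℤ) * (-(k : ℤ) - 1))
        rw [show i + (n : ℤ) * (-(k : ℤ) - 1) + (n : ℤ) = i + (n : ℤ) * (-(k : ℤ)) by ring]
          at h2
        rw [← h2]; exact ih i
  -- periodicity of `E` for all integer multiples of `2n`
  have hEper' : ∀ k : ℤ, ∀ i : ℤ, E (i + (2 * (n : ℤ)) * k) = E i := by
    intro k
    induction k using Int.induction_on with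
    | zero => intro i; simp
    | succ k ih =>
        intro i
        have h1 : i + (2 * (n : ℤ)) * ((k : ℤ) + 1) = (i + (2 * (n : ℤ)) * k) + 2 * (n : ℤ) := by
          ring
        rw [h1, hEper, ih]
    | pred k ih =>
        intro i
        have h2 := hEper (i + (2 * (n : ℤ)) * (-(k : ℤ) - 1))
        rw [show i + (2 * (n : ℤ)) * (-(k : ℤ) - 1) + 2 * (n : ℤ)
              = i + (2 * (n : ℤ)) * (-(k : ℤ)) by ring] at h2
        rw [← h2]; exact ih i
  -- the key structural description of `E`
  have key : ∀ j : ℤ, (Odd j → E j = w j) ∧ (Even j → E j = -(α • w j)) := by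
    intro j
    obtain ⟨k, r, hr1, hr2, hjr⟩ : ∃ k r : ℤ, 1 ≤ r ∧ r ≤ 2 * (n : ℤ) ∧
        j = r + (2 * (n : ℤ)) * k := by
      refine ⟨(j - 1) / (2 * (n : ℤ)), (j - 1) % (2 * (n : ℤ)) + 1, ?_, ?_, ?_⟩
      · have := Int.emod_nonneg (j - 1) (show (2 * (n : ℤ)) ≠ 0 by omega)
        omega
      · have := Int.emod_lt_of_pos (j - 1) (show (0 : ℤ) < 2 * (n : ℤ) by omega)
        omega
      · have := Int.mul_ediv_add_emod (j - 1) (2 * (n : ℤ))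
        linarith
    obtain ⟨t, ht⟩ : ∃ t : ℤ, j = r + 2 * t := ⟨(n : ℤ) * k, by rw [hjr]; ring⟩
    have hEj : E j = E r := by rw [hjr]; exact hEper' k r
    have hwj : w j = w r := by
      rw [hjr, show r + 2 * (n : ℤ) * k = r + (n : ℤ) * (2 * k) by ring]
      exact hwper (2 * k) r
    rw [hEj, hwj]
    rcases le_or_gt r (n : ℤ) with h | h
    · rcases Int.even_or_odd r with he | ho
      · constructor
        · intro hoj
          exfalso
          have h1 := Int.odd_iff.mp hoj
          have h2 := Int.even_iff.mp he
          omega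
        · intro _; exact (hE2 r hr1 h he).1
      · constructor
        · intro _; exact (hE1 r hr1 h ho).1
        · intro hej
          exfalso
          have h1 := Int.even_iff.mp hej
          have h2 := Int.odd_iff.mp ho
          omega
    · have hi1 : 1 ≤ r - (n : ℤ) := by omega
      have hi2 : r - (n : ℤ) ≤ (n : ℤ) := by omega
      have hw' : w r = w (r - (n : ℤ)) := by
        conv_lhs => rw [show r = (r - (n : ℤ)) + (n : ℤ) by ring]
        exact hper (r - (n : ℤ))
      rcases Int.even_or_odd (r - (n : ℤ)) with he | ho
      · have hE := (hE2 (r - (n : ℤ)) hi1 hi2 he).2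
        rw [show (n : ℤ) + (r - (n : ℤ)) = r by ring] at hE
        constructor
        · intro _; rw [hE, hw']
        · intro hej
          exfalso
          have h1 := Int.even_iff.mp hej
          have h2 := Int.even_iff.mp he
          omega
      · have hE := (hE1 (r - (n : ℤ)) hi1 hi2 ho).2
        rw [show (n : ℤ) + (r - (n : ℤ)) = r by ring] at hE
        constructor
        · intro hoj
          exfalso
          have h1 := Int.odd_iff.mp hoj
          have h2 := Int.odd_iff.mp ho
          omega
        · intro _; rw [hE, hw']
  refine ⟨?_, ?_, ?_, ?_⟩
  · -- (a) the sum vanishes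
    have hpair : ∀ i : ℤ, i ∈ Finset.Icc (1 : ℤ) (n : ℤ) →
        E i + E ((n : ℤ) + i) = w i - α • w i := by
      intro i hi
      rw [Finset.mem_Icc] at hi
      rcases Int.even_or_odd i with he | ho
      · obtain ⟨a, b⟩ := hE2 i hi.1 hi.2 he
        rw [a, b]; abel
      · obtain ⟨a, b⟩ := hE1 i hi.1 hi.2 ho
        rw [a, b]; abel
    have hsplit : Finset.Icc (1 : ℤ) (2 * (n : ℤ))
        = Finset.Icc (1 : ℤ) (n : ℤ) ∪ Finset.Icc ((n : ℤ) + 1) (2 * (n : ℤ)) := by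
      ext x
      simp only [Finset.mem_Icc, Finset.mem_union]
      omega
    have hdisj : Disjoint (Finset.Icc (1 : ℤ) (n : ℤ))
        (Finset.Icc ((n : ℤ) + 1) (2 * (n : ℤ))) := by
      rw [Finset.disjoint_left]
      intro x hx hx'
      rw [Finset.mem_Icc] at hx hx'
      omega
    have hmap : Finset.Icc ((n : ℤ) + 1) (2 * (n : ℤ))
        = (Finset.Icc (1 : ℤ) (n : ℤ)).map
            ⟨fun i => (n : ℤ) + i, add_right_injective _⟩ := by
      ext x
      simp only [Finset.mem_Icc, Finset.mem_map, Function.Embedding.coeFn_mk]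
      constructor
      · intro hx
        exact ⟨x - (n : ℤ), by omega, by ring⟩
      · rintro ⟨a, ha, rfl⟩
        omega
    rw [hsplit, Finset.sum_union hdisj, hmap, Finset.sum_map]
    simp only [Function.Embedding.coeFn_mk]
    rw [← Finset.sum_add_distrib, Finset.sum_congr rfl hpair]
    have : ∑ i ∈ Finset.Icc (1 : ℤ) (n : ℤ), (w i - α • w i)
        = (∑ i ∈ Finset.Icc (1 : ℤ) (n : ℤ), w i)
          - α • (∑ i ∈ Finset.Icc (1 : ℤ) (n : ℤ), w i) := by
      rw [Finset.sum_sub_distrib, Finset.smul_sum]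
    rw [this, hsum, smul_zero, sub_zero]
  · -- (b) opposite sides are parallel
    intro i
    rcases Int.even_or_odd i with he | ho
    · refine ⟨-α⁻¹, ?_⟩
      have h1 : E i = -(α • w i) := (key i).2 he
      have h2 : E (i + (n : ℤ)) = w (i + (n : ℤ)) := (key (i + (n : ℤ))).1 (he.add_odd hoddZ)
      rw [h1, h2, hper i, smul_neg, neg_smul, neg_neg, smul_smul,
        inv_mul_cancel₀ hα.ne', one_smul]
    · refine ⟨-α, ?_⟩
      have h1 : E i = w i := (key i).1 ho
      have h2 : E (i + (n : ℤ)) = -(α • w (i + (n : ℤ))) :=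
        (key (i + (n : ℤ))).2 (ho.add_odd hoddZ)
      rw [h1, h2, hper i, neg_smul]
  · -- (c) local convexity
    intro i
    have hdd : det2 (E i) (E (i + 1)) = -(α * c) := by
      have hd := hdet i
      simp only [det2] at hd ⊢
      rcases Int.even_or_odd i with he | ho
      · rw [(key i).2 he, (key (i + 1)).1 he.add_one]
        simp only [Prod.fst_neg, Prod.snd_neg, Prod.smul_fst, Prod.smul_snd, smul_eq_mul]
        linear_combination (-α) * hd
      · rw [(key i).1 ho, (key (i + 1)).2 ho.add_one]
        simp only [Prod.fst_neg, Prod.snd_neg, Prod.smul_fst, Prod.smul_snd, smul_eq_mul]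
        linear_combination (-α) * hd
    rw [hdd]
    nlinarith
  · -- (d) equal-area
    intro i
    have hdd : det2 (E i) (E (i + 1)) = -(α * c) := by
      have hd := hdet i
      simp only [det2] at hd ⊢
      rcases Int.even_or_odd i with he | ho
      · rw [(key i).2 he, (key (i + 1)).1 he.add_one]
        simp only [Prod.fst_neg, Prod.snd_neg, Prod.smul_fst, Prod.smul_snd, smul_eq_mul]
        linear_combination (-α) * hd
      · rw [(key i).1 ho, (key (i + 1)).2 ho.add_one]
        simp only [Prod.fst_neg, Prod.snd_neg, Prod.smul_fst, Prod.smul_snd, smul_eq_mul]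
        linear_combination (-α) * hd
    simp only [det2] at hdd ⊢
    linarith
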